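/- For each m define c_{mk} = a_{mk} / (1 − Σ_{l=1}^K a_{ml} p_{ml}) for k = 1,…,K. Then the K×K matrix C = (c_{mk}) equals (I − P^T)^{-1}. In particular 1 − Σ_{l=1}^K a_{ml} p_{ml} = 1/c_{mm} and a_{mk} = c_{mk}/c_{mm}. -/

import Mathlib

open Matrix

lemma det_one_sub_ne_zero {n : Type*} [Fintype n] [DecidableEq n]
    (P : Matrix n n ℝ)
    (hspec : ∀ z ∈ spectrum ℂ (P.map Complex.ofReal), ‖z‖ < 1) :
    ((1 : Matrix n n ℝ) - P).det ≠ 0 := by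
  have h1 : (1:ℂ) ∉ spectrum ℂ (P.map Complex.ofReal) := fun h => by
    simpa using hspec 1 h
  rw [spectrum.notMem_iff] at h1
  have h2 : IsUnit ((((1 : Matrix n n ℝ) - P).map Complex.ofReal)) := by
    have hmap : (((1 : Matrix n n ℝ) - P).map Complex.ofReal)
        = (1 : Matrix n n ℂ) - P.map Complex.ofReal := by
      ext i j
      by_cases h : i = j <;> simp [Matrix.map_apply, Matrix.one_apply, Matrix.sub_apply, h]
    rw [hmap]
    simpa using h1
  rw [Matrix.isUnit_iff_isUnit_det] at h2
  intro hdet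
  have : (((1 : Matrix n n ℝ) - P).map Complex.ofReal).det
      = Complex.ofReal (((1 : Matrix n n ℝ) - P).det) :=
    (RingHom.map_det Complex.ofRealHom _).symm
  rw [this, hdet] at h2
  simp at h2


lemma det_submatrix_ne_zero {K : ℕ} (P : Matrix (Fin (K+1)) (Fin (K+1)) ℝ)
    (hP : ∀ k l, 0 ≤ P k l) (hProw : ∀ k, ∑ l, P k l ≤ 1)
    (hdet : ((1 : Matrix (Fin (K+1)) (Fin (K+1)) ℝ) - P).det ≠ 0) (m : Fin (K+1)) :
    (((1 : Matrix (Fin (K+1)) (Fin (K+1)) ℝ) - P).submatrix m.succAbove m.succAbove).det ≠ 0 := by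
  classical
  set σ := m.succAbove with hσ
  intro h
  obtain ⟨x, hx0, hx⟩ := (Matrix.exists_mulVec_eq_zero_iff).mpr h
  -- basic equation : x i = ∑ j, P (σ i) (σ j) * x j
  have hxi : ∀ i, x i = ∑ j, P (σ i) (σ j) * x j := by
    intro i
    have h1 := congrFun hx i
    have h2 : ∑ j, ((if i = j then 1 else 0) - P (σ i) (σ j)) * x j = 0 := by
      simpa [Matrix.mulVec, dotProduct, Matrix.sub_apply, Matrix.one_apply,
        Fin.succAbove_right_injective.eq_iff, hσ] using h1
    have h3 : ∑ j, ((if i = j then 1 else 0) - P (σ i) (σ j)) * x j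
        = x i - ∑ j, P (σ i) (σ j) * x j := by
      simp [sub_mul, Finset.sum_sub_distrib, ite_mul, Finset.sum_ite_eq]
    rw [h3] at h2
    linarith
  obtain ⟨i₀, hi₀⟩ := Function.ne_iff.mp hx0
  have hne : (Finset.univ : Finset (Fin K)).Nonempty := ⟨i₀, Finset.mem_univ _⟩
  set M := Finset.univ.sup' hne (fun i => |x i|) with hMdef
  have hle : ∀ i, |x i| ≤ M := fun i => Finset.le_sup' (fun i => |x i|) (Finset.mem_univ i)
  have hM0 : 0 < M := lt_of_lt_of_le (abs_pos.mpr hi₀) (hle i₀)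
  -- key structural facts at maximizers
  have hkey : ∀ j, |x j| = M → P (σ j) m = 0 ∧ (∀ l, |x l| ≠ M → P (σ j) (σ l) = 0)
      ∧ ∑ l, P (σ j) (σ l) = 1 := by
    intro j hj
    have hrow : P (σ j) m + ∑ l, P (σ j) (σ l) ≤ 1 := by
      have := hProw (σ j)
      rwa [Fin.sum_univ_succAbove (fun l => P (σ j) l) m] at this
    have h1 : M ≤ ∑ l, P (σ j) (σ l) * |x l| := by
      calc M = |x j| := hj.symm
        _ = |∑ l, P (σ j) (σ l) * x l| := by rw [← hxi j]
        _ ≤ ∑ l, |P (σ j) (σ l) * x l| := Finset.abs_sum_le_sum_abs _ _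
        _ = ∑ l, P (σ j) (σ l) * |x l| := by
            refine Finset.sum_congr rfl fun l _ => ?_
            rw [abs_mul, abs_of_nonneg (hP _ _)]
    have h2 : ∑ l, P (σ j) (σ l) * |x l| ≤ (∑ l, P (σ j) (σ l)) * M := by
      rw [Finset.sum_mul]
      exact Finset.sum_le_sum fun l _ => mul_le_mul_of_nonneg_left (hle l) (hP _ _)
    have hS2 : ∑ l, P (σ j) (σ l) = 1 := by
      have hub : ∑ l, P (σ j) (σ l) ≤ 1 := by
        have := hP (σ j) m; linarith
      have hlb : 1 ≤ ∑ l, P (σ j) (σ l) := by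
        nlinarith [h1, h2, hM0]
      linarith
    have hPm : P (σ j) m = 0 := by
      have := hP (σ j) m; rw [hS2] at hrow; linarith
    refine ⟨hPm, ?_, hS2⟩
    -- each term P (σ j) (σ l) * (M - |x l|) = 0
    have hsum0 : ∑ l, P (σ j) (σ l) * (M - |x l|) = 0 := by
      have : ∑ l, P (σ j) (σ l) * (M - |x l|)
          = (∑ l, P (σ j) (σ l)) * M - ∑ l, P (σ j) (σ l) * |x l| := by
        rw [Finset.sum_mul, ← Finset.sum_sub_distrib]
        exact Finset.sum_congr rfl fun l _ => by ring
      rw [this, hS2, one_mul]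
      have : ∑ l, P (σ j) (σ l) * |x l| ≤ M := by rw [hS2, one_mul] at h2; exact h2
      linarith
    intro l hl
    have hterm := (Finset.sum_eq_zero_iff_of_nonneg (fun l _ =>
      mul_nonneg (hP _ _) (by linarith [hle l] : (0:ℝ) ≤ M - |x l|))).mp hsum0 l (Finset.mem_univ l)
    have hlt : |x l| < M := lt_of_le_of_ne (hle l) hl
    have : M - |x l| ≠ 0 := by linarith
    exact (mul_eq_zero.mp hterm).resolve_right this
  -- the 0/1 vector supported on the "stochastic block"
  set u : Fin (K+1) → ℝ := fun k => if ∃ i, σ i = k ∧ |x i| = M then 1 else 0 with hudef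
  have hu01 : ∀ k, u k = 0 ∨ u k = 1 := by
    intro k; by_cases h : ∃ i, σ i = k ∧ |x i| = M <;> simp [hudef, h]
  have huσ : ∀ i, u (σ i) = if |x i| = M then 1 else 0 := by
    intro i
    by_cases h : |x i| = M
    · rw [if_pos h]; simp only [hudef]; rw [if_pos ⟨i, rfl, h⟩]
    · simp only [hudef]
      rw [if_neg, if_neg h]
      rintro ⟨i', hi', hM⟩
      exact h (by rwa [Fin.succAbove_right_injective hi'] at hM)
  have hum : u m = 0 := by
    simp only [hudef]
    rw [if_neg]
    rintro ⟨i, hi, -⟩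
    exact Fin.succAbove_ne m i hi
  -- the row-sum identity for rows in the block
  have hblock : ∀ k, u k = 1 → ∑ l, P k l * u l = 1 := by
    intro k hk
    have hex : ∃ i, σ i = k ∧ |x i| = M := by
      by_contra h; simp only [hudef] at hk; rw [if_neg h] at hk; norm_num at hk
    obtain ⟨j, rfl, hj⟩ := hex
    obtain ⟨hPm, hz, hS2⟩ := hkey j hj
    rw [Fin.sum_univ_succAbove (fun l => P (σ j) l * u l) m, hum, hPm]
    have : ∀ i, P (σ j) (σ i) * u (σ i) = P (σ j) (σ i) := by
      intro i
      rcases eq_or_ne (|x i|) M with h | h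
      · rw [huσ, if_pos h, mul_one]
      · simp [hz i h]
    rw [Finset.sum_congr rfl fun i _ => this i]
    simpa using hS2
  -- det (1 - Q) = 0 where Q k l = u k * P k l
  set Q : Matrix (Fin (K+1)) (Fin (K+1)) ℝ := Matrix.of fun k l => u k * P k l with hQdef
  obtain ⟨j₀, -, hj₀⟩ := Finset.exists_mem_eq_sup' hne (fun i => |x i|)
  have hu0 : u ≠ 0 := by
    intro h
    have : u (σ j₀) = 0 := by rw [h]; rfl
    rw [huσ, if_pos hj₀.symm] at this
    norm_num at this
  have hQu : ((1 : Matrix (Fin (K+1)) (Fin (K+1)) ℝ) - Q) *ᵥ u = 0 := by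
    funext k
    have hexp : (((1 : Matrix (Fin (K+1)) (Fin (K+1)) ℝ) - Q) *ᵥ u) k
        = u k - u k * ∑ l, P k l * u l := by
      simp only [Matrix.mulVec, dotProduct, Matrix.sub_apply, Matrix.one_apply, hQdef,
        Matrix.of_apply, sub_mul, Finset.sum_sub_distrib]
      congr 1
      · simp [Finset.sum_ite_eq, ite_mul]
      · rw [Finset.mul_sum]; exact Finset.sum_congr rfl fun l _ => by ring
    rw [hexp]
    rcases hu01 k with h | h
    · simp [h]
    · rw [h, hblock k h]; simp
  have hdetQ : ((1 : Matrix (Fin (K+1)) (Fin (K+1)) ℝ) - Q).det = 0 :=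
    (Matrix.exists_mulVec_eq_zero_iff).mp ⟨u, hu0, hQu⟩
  -- transpose: get a left eigenvector v
  have hdetQT : (((1 : Matrix (Fin (K+1)) (Fin (K+1)) ℝ) - Q)ᵀ).det = 0 := by
    rw [Matrix.det_transpose]; exact hdetQ
  obtain ⟨v, hv0, hv⟩ := (Matrix.exists_mulVec_eq_zero_iff).mpr hdetQT
  have hvk : ∀ k, v k = ∑ l, u l * P l k * v l := by
    intro k
    have h1 := congrFun hv k
    have h2 : ∑ l, ((if l = k then 1 else 0) - u l * P l k) * v l = 0 := by
      simpa [Matrix.mulVec, dotProduct, Matrix.sub_apply, Matrix.one_apply,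
        Matrix.transpose_apply, hQdef, eq_comm] using h1
    have h3 : ∑ l, ((if l = k then 1 else 0) - u l * P l k) * v l
        = v k - ∑ l, u l * P l k * v l := by
      simp [sub_mul, Finset.sum_sub_distrib, ite_mul, Finset.sum_ite_eq']
    rw [h3] at h2
    linarith
  -- v vanishes off the block
  have hvz : ∀ k, u k = 0 → v k = 0 := by
    intro k hk
    rw [hvk k]
    refine Finset.sum_eq_zero fun l _ => ?_
    rcases hu01 l with h | h
    · rw [h]; ring
    · have hex : ∃ i, σ i = l ∧ |x i| = M := by
        by_contra hcon; simp only [hudef] at h; rw [if_neg hcon] at h; norm_num at h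
      obtain ⟨i, rfl, hi⟩ := hex
      obtain ⟨hPm, hz, -⟩ := hkey i hi
      rcases eq_or_ne k m with rfl | hkm
      · rw [hPm]; ring
      · obtain ⟨i', rfl⟩ := Fin.exists_succAbove_eq hkm
        have : |x i'| ≠ M := by
          intro hM
          simp only [hudef] at hk
          rw [if_pos ⟨i', rfl, hM⟩] at hk
          norm_num at hk
        rw [hz i' this]; ring
  -- v is a left eigenvector of P : det(1 - P) = 0
  have hPv : ((1 : Matrix (Fin (K+1)) (Fin (K+1)) ℝ) - P)ᵀ *ᵥ v = 0 := by
    funext k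
    have hexp : (((1 : Matrix (Fin (K+1)) (Fin (K+1)) ℝ) - P)ᵀ *ᵥ v) k
        = v k - ∑ l, P l k * v l := by
      simp only [Matrix.mulVec, dotProduct, Matrix.sub_apply, Matrix.one_apply,
        Matrix.transpose_apply, sub_mul, Finset.sum_sub_distrib]
      congr 1
      simp [Finset.sum_ite_eq', ite_mul]
    rw [hexp]
    have : ∑ l, P l k * v l = ∑ l, u l * P l k * v l := by
      refine Finset.sum_congr rfl fun l _ => ?_
      rcases hu01 l with h | h
      · rw [h, hvz l h]; ring
      · rw [h]; ring
    rw [this, ← hvk k, sub_self]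
    rfl
  have : (((1 : Matrix (Fin (K+1)) (Fin (K+1)) ℝ) - P)ᵀ).det = 0 :=
    (Matrix.exists_mulVec_eq_zero_iff).mp ⟨v, hv0, hPv⟩
  rw [Matrix.det_transpose] at this
  exact hdet this


theorem stmt_4_aux {K : ℕ} (P : Matrix (Fin (K + 1)) (Fin (K + 1)) ℝ)
    (hdet : ((1 : Matrix (Fin (K+1)) (Fin (K+1)) ℝ) - P).det ≠ 0)
    (hdetsub : ∀ m : Fin (K+1),
      (((1 : Matrix (Fin (K+1)) (Fin (K+1)) ℝ) - P).submatrix m.succAbove m.succAbove).det ≠ 0)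
    (a : Fin (K + 1) → Fin (K + 1) → ℝ)
    (ha_diag : ∀ m, a m m = 1)
    (ha : ∀ (m : Fin (K + 1)) (i : Fin K),
      a m (m.succAbove i)
        = ((((1 : Matrix (Fin (K + 1)) (Fin (K + 1)) ℝ) - P).submatrix m.succAbove m.succAbove)⁻¹
            *ᵥ (fun j => P (m.succAbove j) m)) i)
    (c : Fin (K + 1) → Fin (K + 1) → ℝ)
    (hc : ∀ m k, c m k = a m k / (1 - ∑ l, a m l * P m l)) :
    Matrix.of c = ((1 : Matrix (Fin (K + 1)) (Fin (K + 1)) ℝ) - Pᵀ)⁻¹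
      ∧ (∀ m, 1 - ∑ l, a m l * P m l = 1 / c m m)
      ∧ (∀ m k, a m k = c m k / c m m) := by
  classical
  set A : Matrix (Fin (K+1)) (Fin (K+1)) ℝ := 1 - P with hAdef
  set d : Fin (K+1) → ℝ := fun m => 1 - ∑ l, a m l * P m l with hddef
  have hdetU : IsUnit A.det := isUnit_iff_ne_zero.mpr hdet
  -- the key mulVec identity
  have hkey : ∀ m, A *ᵥ a m = fun k => if k = m then d m else 0 := by
    intro m
    set σ := m.succAbove with hσ
    set B := A.submatrix σ σ with hBdef
    have hBdet : IsUnit B.det := isUnit_iff_ne_zero.mpr (hdetsub m)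
    -- the defining equation of a on the off-diagonal
    have hB : ∀ i, a m (σ i) - ∑ j, P (σ i) (σ j) * a m (σ j) = P (σ i) m := by
      intro i
      have h1 : B *ᵥ (fun j => a m (σ j)) = fun j => P (σ j) m := by
        have : (fun j => a m (σ j)) = B⁻¹ *ᵥ (fun j => P (σ j) m) := funext (ha m)
        rw [this, Matrix.mulVec_mulVec, Matrix.mul_nonsing_inv _ hBdet, Matrix.one_mulVec]
      have h2 := congrFun h1 i
      have h3 : (B *ᵥ fun j => a m (σ j)) i
          = a m (σ i) - ∑ j, P (σ i) (σ j) * a m (σ j) := by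
        simp [hBdef, hAdef, Matrix.mulVec, dotProduct, Matrix.sub_apply,
          Matrix.one_apply, Fin.succAbove_right_injective.eq_iff, hσ, sub_mul,
          Finset.sum_sub_distrib, ite_mul, Finset.sum_ite_eq]
      rw [h3] at h2
      exact h2
    funext k
    have hexp : (A *ᵥ a m) k = a m k - ∑ l, P k l * a m l := by
      simp [hAdef, Matrix.mulVec, dotProduct, Matrix.sub_apply, Matrix.one_apply,
        sub_mul, Finset.sum_sub_distrib, ite_mul, Finset.sum_ite_eq]
    rw [hexp]
    rcases eq_or_ne k m with rfl | hkm
    · rw [if_pos rfl, hddef, ha_diag]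
      simp only
      congr 1
      exact Finset.sum_congr rfl fun l _ => mul_comm _ _
    · rw [if_neg hkm]
      obtain ⟨i, rfl⟩ := Fin.exists_succAbove_eq hkm
      have hfull : ∑ l, P (σ i) l * a m l
          = P (σ i) m * a m m + ∑ j, P (σ i) (σ j) * a m (σ j) :=
        Fin.sum_univ_succAbove (fun l => P (σ i) l * a m l) m
      rw [hfull, ha_diag, mul_one]
      have := hB i
      linarith
  -- solve for a m
  have ham : ∀ m k, a m k = d m * A⁻¹ k m := by
    intro m k
    have h1 : a m = A⁻¹ *ᵥ (fun k => if k = m then d m else 0) := by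
      rw [← hkey m, Matrix.mulVec_mulVec, Matrix.nonsing_inv_mul _ hdetU, Matrix.one_mulVec]
    have h2 := congrFun h1 k
    rw [h2]
    simp [Matrix.mulVec, dotProduct, mul_ite, Finset.sum_ite_eq', mul_comm]
  have hdm : ∀ m, d m ≠ 0 := by
    intro m hm
    have := ham m m
    rw [ha_diag, hm, zero_mul] at this
    norm_num at this
  have hcval : ∀ m k, c m k = A⁻¹ k m := by
    intro m k
    have hD : (1 - ∑ l, a m l * P m l) = d m := rfl
    rw [hc m k, hD, ham m k]
    exact mul_div_cancel_left₀ _ (hdm m)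
  refine ⟨?_, ?_, ?_⟩
  · ext m k
    rw [Matrix.of_apply, hcval]
    have : (1 : Matrix (Fin (K+1)) (Fin (K+1)) ℝ) - Pᵀ = Aᵀ := by
      rw [hAdef, Matrix.transpose_sub, Matrix.transpose_one]
    rw [this, ← Matrix.transpose_nonsing_inv, Matrix.transpose_apply]
  · intro m
    rw [hc m m, ha_diag, one_div_one_div]
  · intro m k
    have hD : (1 - ∑ l, a m l * P m l) ≠ 0 := hdm m
    rw [hc m k, hc m m, ha_diag]
    field_simp



open Matrix

/-- Equation (26) in the proof of Theorem 2.1: the matrix `C = (c_{mk})` with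
`c_{mk} = a_{mk} / (1 − Σ_l a_{ml} p_{ml})` equals `(I − Pᵀ)⁻¹`; in particular
`1 − Σ_l a_{ml} p_{ml} = 1 / c_{mm}` and `a_{mk} = c_{mk} / c_{mm}`.
Here `a m m = 1` and, for `l ≠ m`, the numbers `a m l` are given by
`(a_{ml})_{l≠m} = ((I−P)(m|m))⁻¹ p_{·m}`. -/
theorem stmt_4 {K : ℕ} (P : Matrix (Fin (K + 1)) (Fin (K + 1)) ℝ)
    (hP : ∀ k l, 0 ≤ P k l) (hProw : ∀ k, ∑ l, P k l ≤ 1)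
    (hspec : ∀ z ∈ spectrum ℂ (P.map Complex.ofReal), ‖z‖ < 1)
    (a : Fin (K + 1) → Fin (K + 1) → ℝ)
    (ha_diag : ∀ m, a m m = 1)
    (ha : ∀ (m : Fin (K + 1)) (i : Fin K),
      a m (m.succAbove i)
        = ((((1 : Matrix (Fin (K + 1)) (Fin (K + 1)) ℝ) - P).submatrix m.succAbove m.succAbove)⁻¹
            *ᵥ (fun j => P (m.succAbove j) m)) i)
    (c : Fin (K + 1) → Fin (K + 1) → ℝ)
    (hc : ∀ m k, c m k = a m k / (1 - ∑ l, a m l * P m l)) :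
    Matrix.of c = ((1 : Matrix (Fin (K + 1)) (Fin (K + 1)) ℝ) - Pᵀ)⁻¹
      ∧ (∀ m, 1 - ∑ l, a m l * P m l = 1 / c m m)
      ∧ (∀ m k, a m k = c m k / c m m) := by
  have hdet : ((1 : Matrix (Fin (K+1)) (Fin (K+1)) ℝ) - P).det ≠ 0 :=
    det_one_sub_ne_zero P hspec
  exact stmt_4_aux P hdet (fun m => det_submatrix_ne_zero P hP hProw hdet m) a ha_diag ha c hc
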